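/- Let W be a symmetric real N×N matrix and let ρ > max(2λ_max(W), 0). Define F(X;ρ) = Tr(X (W − (ρ/2)I) Xᵀ) + Nρ/2. Then the minimum of F(·;ρ) over Δ_k^N equals the minimum of X ↦ Tr(X W Xᵀ) over the set of k×N matrices whose columns are standard basis vectors of ℝ^k. -/

import Mathlib

open Matrix

lemma quad_update {k N : ℕ} (A : Matrix (Fin N) (Fin N) ℝ) (X : Matrix (Fin k) (Fin N) ℝ)
    (j : Fin N) (y : Fin k → ℝ) :
    (∑ p, ∑ q, A p q * ∑ i, (X.updateCol j y) i p * (X.updateCol j y) i q)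
      = A j j * (∑ i, y i * y i)
        + (∑ i, y i * (∑ q ∈ Finset.univ.erase j, (A j q + A q j) * X i q))
        + ∑ p ∈ Finset.univ.erase j, ∑ q ∈ Finset.univ.erase j, A p q * ∑ i, X i p * X i q := by
  classical
  have split : ∀ (g : Fin N → ℝ), ∑ p, g p = g j + ∑ p ∈ Finset.univ.erase j, g p :=
    fun g => (Finset.add_sum_erase _ g (Finset.mem_univ j)).symm
  rw [split]
  rw [split (fun q => A j q * ∑ i, (X.updateCol j y) i j * (X.updateCol j y) i q)]
  have h2 : ∀ p ∈ Finset.univ.erase j,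
      (∑ q, A p q * ∑ i, (X.updateCol j y) i p * (X.updateCol j y) i q)
        = A p j * (∑ i, X i p * y i) + ∑ q ∈ Finset.univ.erase j, A p q * ∑ i, X i p * X i q := by
    intro p hp
    have hpj : p ≠ j := (Finset.mem_erase.mp hp).1
    rw [split (fun q => A p q * ∑ i, (X.updateCol j y) i p * (X.updateCol j y) i q)]
    congr 1
    · simp [Matrix.updateCol_ne hpj]
    · refine Finset.sum_congr rfl fun q hq => ?_
      have hqj : q ≠ j := (Finset.mem_erase.mp hq).1
      simp [Matrix.updateCol_ne hpj, Matrix.updateCol_ne hqj]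
  rw [Finset.sum_congr rfl h2, Finset.sum_add_distrib]
  simp only [Matrix.updateCol_self]
  have h3 : ∀ q ∈ Finset.univ.erase j,
      A j q * ∑ i, y i * (X.updateCol j y) i q = A j q * ∑ i, y i * X i q := by
    intro q hq
    have hqj : q ≠ j := (Finset.mem_erase.mp hq).1
    simp [Matrix.updateCol_ne hqj]
  rw [Finset.sum_congr rfl h3]
  have lin : (∑ i, y i * (∑ q ∈ Finset.univ.erase j, (A j q + A q j) * X i q))
      = (∑ q ∈ Finset.univ.erase j, A j q * ∑ i, y i * X i q)
        + ∑ p ∈ Finset.univ.erase j, A p j * ∑ i, X i p * y i := by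
    rw [← Finset.sum_add_distrib]
    simp only [Finset.mul_sum]
    rw [Finset.sum_comm]
    refine Finset.sum_congr rfl fun q hq => ?_
    rw [← Finset.sum_add_distrib]
    refine Finset.sum_congr rfl fun i _ => ?_
    ring
  rw [lin]
  ring

lemma trace_quad {k N : ℕ} (A : Matrix (Fin N) (Fin N) ℝ) (X : Matrix (Fin k) (Fin N) ℝ) :
    Matrix.trace (X * A * Xᵀ) = ∑ p, ∑ q, A p q * ∑ i, X i p * X i q := by
  simp only [Matrix.trace, Matrix.diag, Matrix.mul_apply, Matrix.transpose_apply,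
    Finset.sum_mul]
  conv_rhs => rw [Finset.sum_comm]
  rw [Finset.sum_comm]
  refine Finset.sum_congr rfl fun q _ => ?_
  rw [Finset.sum_comm]
  refine Finset.sum_congr rfl fun p _ => ?_
  rw [Finset.mul_sum]
  refine Finset.sum_congr rfl fun i _ => ?_
  ring

lemma diag_le_sup {N : ℕ} (W : Matrix (Fin N) (Fin N) ℝ) (hW : W.IsHermitian) (j : Fin N) :
    W j j ≤ ⨆ i, hW.eigenvalues i := by
  classical
  set U : Matrix (Fin N) (Fin N) ℝ := (hW.eigenvectorUnitary : Matrix (Fin N) (Fin N) ℝ) with hU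
  have hUU : U * star U = 1 := (Matrix.mem_unitaryGroup_iff).mp hW.eigenvectorUnitary.2
  have hsq : ∑ t, U j t ^ 2 = 1 := by
    have := congrArg (fun M => M j j) hUU
    simpa [Matrix.mul_apply, Matrix.one_apply, sq] using this
  have key : W j j = ∑ t, hW.eigenvalues t * U j t ^ 2 := by
    conv_lhs => rw [hW.spectral_theorem]
    simp only [Unitary.conjStarAlgAut_apply, Matrix.mul_apply, Matrix.diagonal_apply, Function.comp_apply,
      RCLike.ofReal_real_eq_id, id_eq, mul_ite, mul_zero, Finset.sum_ite_eq',
      Finset.mem_univ, if_true, Matrix.star_apply, star_trivial]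
    refine Finset.sum_congr rfl fun t _ => ?_
    simp only [hU]
    ring
  rw [key]
  have hbdd : BddAbove (Set.range hW.eigenvalues) := Set.Finite.bddAbove (Set.finite_range _)
  calc ∑ t, hW.eigenvalues t * U j t ^ 2 ≤ ∑ t, (⨆ i, hW.eigenvalues i) * U j t ^ 2 := by
        refine Finset.sum_le_sum fun t _ => ?_
        exact mul_le_mul_of_nonneg_right (le_ciSup hbdd t) (sq_nonneg _)
    _ = ⨆ i, hW.eigenvalues i := by rw [← Finset.mul_sum, hsq, mul_one]

lemma exists_le_of_weighted {k : ℕ} (w f : Fin k → ℝ) (hw : ∀ i, 0 ≤ w i)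
    (h1 : ∑ i, w i = 1) (c : ℝ) (h : ∑ i, w i * f i ≤ c) : ∃ i, f i ≤ c := by
  by_contra hcon
  push_neg at hcon
  obtain ⟨i0, hi0⟩ : ∃ i, 0 < w i := by
    by_contra hall
    push_neg at hall
    have : ∑ i, w i = 0 := Finset.sum_eq_zero fun i _ => le_antisymm (hall i) (hw i)
    rw [this] at h1; norm_num at h1
  have hlt : ∑ i, w i * c < ∑ i, w i * f i :=
    Finset.sum_lt_sum (fun i _ => mul_le_mul_of_nonneg_left (hcon i).le (hw i))
      ⟨i0, Finset.mem_univ i0, mul_lt_mul_of_pos_left (hcon i0) hi0⟩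
  rw [← Finset.sum_mul, h1, one_mul] at hlt
  linarith

lemma sq_sum_le_one {k : ℕ} (x : Fin k → ℝ) (hx : ∀ i, 0 ≤ x i) (h1 : ∑ i, x i = 1) :
    ∑ i, x i * x i ≤ 1 := by
  calc ∑ i, x i * x i ≤ ∑ i, x i * 1 := by
        refine Finset.sum_le_sum fun i _ => mul_le_mul_of_nonneg_left ?_ (hx i)
        calc x i ≤ ∑ i', x i' := Finset.single_le_sum (fun i' _ => hx i') (Finset.mem_univ i)
          _ = 1 := h1
    _ = 1 := by simp [h1]

lemma step_col {k N : ℕ} (A : Matrix (Fin N) (Fin N) ℝ) (j : Fin N) (hAjj : A j j ≤ 0)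
    (X : Matrix (Fin k) (Fin N) ℝ) (hpos : ∀ i, 0 ≤ X i j) (hsum : ∑ i, X i j = 1) :
    ∃ i : Fin k, (∑ p, ∑ q, A p q *
        ∑ i', (X.updateCol j (Pi.single i 1)) i' p * (X.updateCol j (Pi.single i 1)) i' q)
      ≤ ∑ p, ∑ q, A p q * ∑ i', X i' p * X i' q := by
  classical
  set B : Fin k → ℝ := fun i => ∑ q ∈ Finset.univ.erase j, (A j q + A q j) * X i q with hB
  set C : ℝ := ∑ p ∈ Finset.univ.erase j, ∑ q ∈ Finset.univ.erase j,
    A p q * ∑ i, X i p * X i q with hC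
  have hXfix : X.updateCol j (fun i => X i j) = X := by
    ext a b
    by_cases hb : b = j
    · subst hb; simp
    · simp [Matrix.updateCol_ne hb]
  have hQX : (∑ p, ∑ q, A p q * ∑ i', X i' p * X i' q)
      = A j j * (∑ i, X i j * X i j) + (∑ i, X i j * B i) + C := by
    conv_lhs => rw [← hXfix]
    exact quad_update A X j _
  have hQe : ∀ i : Fin k, (∑ p, ∑ q, A p q *
      ∑ i', (X.updateCol j (Pi.single i 1)) i' p * (X.updateCol j (Pi.single i 1)) i' q)
      = A j j + B i + C := by
    intro i
    rw [quad_update]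
    have h1 : (∑ i' : Fin k, Pi.single (M := fun _ => ℝ) i 1 i' * Pi.single (M := fun _ => ℝ) i 1 i') = 1 := by
      simp [Pi.single_apply]
    have h2 : (∑ i' : Fin k, Pi.single (M := fun _ => ℝ) i 1 i' * B i') = B i := by
      simp [Pi.single_apply]
    rw [h1, h2, mul_one, ← hC]
  have key : ∑ i, X i j * (A j j + B i + C)
      ≤ A j j * (∑ i, X i j * X i j) + (∑ i, X i j * B i) + C := by
    have hle : ∑ i, X i j * X i j ≤ 1 := sq_sum_le_one _ hpos hsum
    have expand : ∑ i, X i j * (A j j + B i + C)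
        = A j j + (∑ i, X i j * B i) + C := by
      calc ∑ i, X i j * (A j j + B i + C)
          = ∑ i, (X i j * (A j j + C) + X i j * B i) :=
            Finset.sum_congr rfl fun i _ => by ring
        _ = (∑ i, X i j) * (A j j + C) + ∑ i, X i j * B i := by
            rw [Finset.sum_add_distrib, Finset.sum_mul]
        _ = A j j + (∑ i, X i j * B i) + C := by rw [hsum]; ring
    rw [expand]
    nlinarith [mul_le_mul_of_nonpos_left hle hAjj]
  obtain ⟨i, hi⟩ := exists_le_of_weighted (fun i => X i j) (fun i => A j j + B i + C)
    hpos hsum _ key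
  exact ⟨i, by rw [hQe i, hQX]; exact hi⟩

lemma round_all {k N : ℕ} (A : Matrix (Fin N) (Fin N) ℝ) (hA : ∀ j, A j j ≤ 0)
    (S : Finset (Fin N)) (X : Matrix (Fin k) (Fin N) ℝ)
    (hpos : ∀ i j, 0 ≤ X i j) (hsum : ∀ j, ∑ i, X i j = 1) :
    ∃ Y : Matrix (Fin k) (Fin N) ℝ, (∀ i j, 0 ≤ Y i j) ∧ (∀ j, ∑ i, Y i j = 1) ∧
      (∀ j ∈ S, ∃ i, (fun a => Y a j) = Pi.single i 1) ∧
      (∑ p, ∑ q, A p q * ∑ i, Y i p * Y i q) ≤ ∑ p, ∑ q, A p q * ∑ i, X i p * X i q := by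
  classical
  induction S using Finset.induction_on with
  | empty => exact ⟨X, hpos, hsum, by simp, le_refl _⟩
  | @insert j S hj ih =>
    obtain ⟨Y, hYpos, hYsum, hYvert, hYle⟩ := ih
    obtain ⟨i, hi⟩ := step_col A j (hA j) Y (fun i => hYpos i j) (hYsum j)
    refine ⟨Y.updateCol j (Pi.single i 1), ?_, ?_, ?_, le_trans hi hYle⟩
    · intro a b
      by_cases hb : b = j
      · subst hb
        simp only [Matrix.updateCol_self]
        rw [Pi.single_apply]
        split <;> norm_num
      · rw [Matrix.updateCol_ne hb]; exact hYpos a b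
    · intro b
      by_cases hb : b = j
      · subst hb
        simp [Pi.single_apply]
      · simp only [Matrix.updateCol_ne hb]; exact hYsum b
    · intro b hb
      by_cases hb' : b = j
      · subst hb'
        exact ⟨i, funext fun a => Matrix.updateCol_self⟩
      · obtain ⟨i', hi'⟩ := hYvert b (Finset.mem_of_mem_insert_of_ne hb hb')
        exact ⟨i', by rw [← hi']; funext a; exact Matrix.updateCol_ne hb'⟩

lemma vertex_trace {k N : ℕ} (W : Matrix (Fin N) (Fin N) ℝ) (ρ : ℝ)
    (X : Matrix (Fin k) (Fin N) ℝ) (hX : ∀ j, ∃ i, (fun a => X a j) = Pi.single i 1) :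
    Matrix.trace (X * (W - (ρ / 2) • 1) * Xᵀ) + N * ρ / 2 = Matrix.trace (X * W * Xᵀ) := by
  rw [trace_quad, trace_quad]
  have hcol : ∀ p, (∑ i, X i p * X i p) = 1 := by
    intro p
    obtain ⟨i0, h⟩ := hX p
    have h' := fun a => congrFun h a
    simp [h', Pi.single_apply]
  have expand : ∀ p q : Fin N, (W - (ρ / 2) • 1) p q * (∑ i, X i p * X i q)
      = W p q * (∑ i, X i p * X i q)
        - (if p = q then (ρ/2) * (∑ i, X i p * X i q) else 0) := by
    intro p q
    simp only [Matrix.sub_apply, Matrix.smul_apply, Matrix.one_apply, smul_eq_mul]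
    split <;> ring
  simp only [expand]
  rw [Finset.sum_congr rfl fun p (_ : p ∈ Finset.univ) => Finset.sum_sub_distrib _ _]
  rw [Finset.sum_sub_distrib]
  have hdiag : (∑ p : Fin N, ∑ q : Fin N,
      if p = q then (ρ/2) * (∑ i, X i p * X i q) else 0) = N * (ρ/2) := by
    have : ∀ p : Fin N, (∑ q : Fin N, if p = q then (ρ/2) * (∑ i, X i p * X i q) else 0)
        = ρ/2 := by
      intro p
      rw [Finset.sum_ite_eq Finset.univ p (fun q => (ρ/2) * (∑ i, X i p * X i q))]
      simp [hcol p]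
    rw [Finset.sum_congr rfl fun p _ => this p]
    simp [mul_comm]
  rw [hdiag]
  ring
/-- Let `W` be a symmetric real `N×N` matrix and `ρ > max(2 λ_max(W), 0)`. Set
`F(X;ρ) = Tr(X (W − (ρ/2)I) Xᵀ) + Nρ/2`. Then the minimum of `F(·;ρ)` over `Δ_k^N`
equals the minimum of `X ↦ Tr(X W Xᵀ)` over the set of `k×N` matrices whose columns
are standard basis vectors of `ℝ^k`. -/
theorem penalized_min_value_eq (k N : ℕ) (W : Matrix (Fin N) (Fin N) ℝ)
    (hW : W.IsHermitian) (ρ : ℝ) (hρ : max (2 * ⨆ i, hW.eigenvalues i) 0 < ρ) :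
    sInf ((fun X : Matrix (Fin k) (Fin N) ℝ =>
          Matrix.trace (X * (W - (ρ / 2) • 1) * Xᵀ) + N * ρ / 2) ''
        {X | (∀ i j, 0 ≤ X i j) ∧ ∀ j, ∑ i, X i j = 1})
      = sInf ((fun X : Matrix (Fin k) (Fin N) ℝ => Matrix.trace (X * W * Xᵀ)) ''
        {X | ∀ j, ∃ i, (fun a => X a j) = Pi.single i 1}) := by
  classical
  by_cases hkN : k = 0 ∧ N ≠ 0
  · obtain ⟨hk, hN⟩ := hkN
    subst hk
    have j0 : Fin N := ⟨0, Nat.pos_of_ne_zero hN⟩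
    have h1 : {X : Matrix (Fin 0) (Fin N) ℝ | (∀ i j, 0 ≤ X i j) ∧ ∀ j, ∑ i, X i j = 1} = ∅ := by
      ext X
      simp only [Set.mem_setOf_eq, Set.mem_empty_iff_false, iff_false, not_and]
      intro _ h
      have := h j0
      simp at this
    have h2 : {X : Matrix (Fin 0) (Fin N) ℝ | ∀ j, ∃ i, (fun a => X a j) = Pi.single i 1} = ∅ := by
      ext X
      simp only [Set.mem_setOf_eq, Set.mem_empty_iff_false, iff_false]
      intro h
      obtain ⟨i, _⟩ := h j0
      exact i.elim0
    rw [h1, h2, Set.image_empty, Set.image_empty]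
  · rw [not_and_or, not_not] at hkN
    -- basic facts about ρ and the matrix A
    set A : Matrix (Fin N) (Fin N) ℝ := W - (ρ / 2) • 1 with hA
    have hAdiag : ∀ j, A j j ≤ 0 := by
      intro j
      have h1 := diag_le_sup W hW j
      have h2 : 2 * (⨆ i, hW.eigenvalues i) < ρ := lt_of_le_of_lt (le_max_left _ _) hρ
      simp only [hA, Matrix.sub_apply, Matrix.smul_apply, Matrix.one_apply_eq, smul_eq_mul,
        mul_one]
      linarith
    -- vertex set properties
    have hvd : ∀ V : Matrix (Fin k) (Fin N) ℝ,
        (∀ j, ∃ i, (fun a => V a j) = Pi.single i 1) →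
        (∀ i j, 0 ≤ V i j) ∧ ∀ j, ∑ i, V i j = 1 := by
      intro V hV
      constructor
      · intro i j
        obtain ⟨i0, h⟩ := hV j
        have := congrFun h i
        rw [this, Pi.single_apply]
        split <;> norm_num
      · intro j
        obtain ⟨i0, h⟩ := hV j
        have h' := fun a => congrFun h a
        simp [h', Pi.single_apply]
    have hvert_ne : {X : Matrix (Fin k) (Fin N) ℝ |
        ∀ j, ∃ i, (fun a => X a j) = Pi.single i 1}.Nonempty := by
      rcases hkN with hk | hN
      · refine ⟨Matrix.of fun a _ =>
            (Pi.single (⟨0, Nat.pos_of_ne_zero hk⟩ : Fin k) 1 : Fin k → ℝ) a,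
          fun j => ⟨⟨0, Nat.pos_of_ne_zero hk⟩, rfl⟩⟩
      · subst hN
        exact ⟨0, fun j => j.elim0⟩
    -- main rounding result
    have main : ∀ X : Matrix (Fin k) (Fin N) ℝ,
        (∀ i j, 0 ≤ X i j) → (∀ j, ∑ i, X i j = 1) →
        ∃ V : Matrix (Fin k) (Fin N) ℝ, (∀ j, ∃ i, (fun a => V a j) = Pi.single i 1) ∧
          Matrix.trace (V * W * Vᵀ)
            ≤ Matrix.trace (X * A * Xᵀ) + N * ρ / 2 := by
      intro X hpos hsum
      obtain ⟨Y, hYpos, hYsum, hYvert, hYle⟩ := round_all A hAdiag Finset.univ X hpos hsum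
      have hYvert' : ∀ j, ∃ i, (fun a => Y a j) = Pi.single i 1 :=
        fun j => hYvert j (Finset.mem_univ j)
      refine ⟨Y, hYvert', ?_⟩
      have := vertex_trace W ρ Y hYvert'
      rw [← hA] at this
      rw [← this]
      have hle : Matrix.trace (Y * A * Yᵀ) ≤ Matrix.trace (X * A * Xᵀ) := by
        rw [trace_quad, trace_quad]; exact hYle
      linarith
    set SL := (fun X : Matrix (Fin k) (Fin N) ℝ =>
        Matrix.trace (X * (W - (ρ / 2) • 1) * Xᵀ) + N * ρ / 2) ''
      {X | (∀ i j, 0 ≤ X i j) ∧ ∀ j, ∑ i, X i j = 1} with hSL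
    set ST := (fun X : Matrix (Fin k) (Fin N) ℝ => Matrix.trace (X * W * Xᵀ)) ''
      {X | ∀ j, ∃ i, (fun a => X a j) = Pi.single i 1} with hST
    have hsub : ST ⊆ SL := by
      rintro b ⟨V, hV, rfl⟩
      refine ⟨V, hvd V hV, ?_⟩
      exact vertex_trace W ρ V hV
    have hTfin : ST.Finite := by
      have : ST ⊆ Set.range (fun σ : Fin N → Fin k =>
          Matrix.trace ((Matrix.of fun a b => Pi.single (σ b) (1:ℝ) a) * W *
            (Matrix.of fun a b => Pi.single (σ b) (1:ℝ) a)ᵀ)) := by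
        rintro b ⟨V, hV, rfl⟩
        refine ⟨fun j => (hV j).choose, ?_⟩
        have hVeq : V = Matrix.of fun a b => Pi.single ((hV b).choose) (1:ℝ) a := by
          ext a b
          exact congrFun (hV b).choose_spec a
        show Matrix.trace ((Matrix.of fun a b => Pi.single ((hV b).choose) (1:ℝ) a) * W *
          (Matrix.of fun a b => Pi.single ((hV b).choose) (1:ℝ) a)ᵀ) = _
        rw [← hVeq]
      exact Set.Finite.subset (Set.finite_range _) this
    have hBddT : BddBelow ST := hTfin.bddBelow
    have hlow : ∀ b ∈ SL, sInf ST ≤ b := by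
      rintro b ⟨X, hX, rfl⟩
      obtain ⟨V, hV, hle⟩ := main X hX.1 hX.2
      refine le_trans (csInf_le hBddT ⟨V, hV, rfl⟩) ?_
      rw [← hA]
      exact hle
    have hBddS : BddBelow SL := ⟨sInf ST, hlow⟩
    have hTne : ST.Nonempty := hvert_ne.image _
    have hSne : SL.Nonempty := hTne.mono hsub
    exact le_antisymm (csInf_le_csInf hBddS hTne hsub) (le_csInf hSne hlow)
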